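/- Common support of soft-optimal trajectory laws (Proposition common_support): Let β > 0 and let r, r′ be bounded measurable rewards. Then the trajectory laws P^{π*_r} and P^{π*_{r′}} are mutually absolutely continuous, and the Radon–Nikodym derivative is given for P^{π*_{r′}}-almost every trajectory τ = (s₁,a₁,…,s_T,a_T) by dP^{π*_r}/dP^{π*_{r′}}(τ) = Π_{t=1}^T π*_{t,r}(a_t|s_t) / π*_{t,r′}(a_t|s_t), which takes values in (0, ∞). -/

import Mathlib

open MeasureTheory ProbabilityTheory Real
open scoped ENNReal RealInnerProductSpace

noncomputable section

namespace IRL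

variable {S A : Type*} [MeasurableSpace S] [MeasurableSpace A]

/-- A reward tuple `(r_t)` of bounded measurable functions. -/
def IsBddReward (r : ℕ → S → A → ℝ) : Prop :=
  ∀ t, Measurable (fun q : S × A => r t q.1 q.2) ∧ ∃ C, ∀ s a, |r t s a| ≤ C

/-- `p` is a family of `ν`-probability densities of a Markov policy. -/
def IsPolicyDensity (ν : Measure A) (p : ℕ → S → A → ℝ) : Prop :=
  (∀ t, Measurable (fun q : S × A => p t q.1 q.2)) ∧ (∀ t s a, 0 ≤ p t s a) ∧
    (∀ t s, ∫ a, p t s a ∂ν = 1)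

/-- the log-densities `log π_t` are bounded (in particular the densities are positive). -/
def HasBddLogDensity (p : ℕ → S → A → ℝ) : Prop :=
  ∀ t, (∀ s a, 0 < p t s a) ∧ ∃ C, ∀ s a, |Real.log (p t s a)| ≤ C

variable (T : ℕ) (P : ℕ → Kernel (S × A) S) (ν : Measure A)

/-- Soft-optimal value function `V*_{t,r}` (backward recursion, `V* t ≡ 0` for `t > T`). -/
def Vstar (β : ℝ) (r : ℕ → S → A → ℝ) (t : ℕ) (s : S) : ℝ :=
  if T < t then 0
  else β * Real.log (∫ a, Real.exp ((r t s a + ∫ s', Vstar β r (t + 1) s' ∂(P t (s, a))) / β) ∂ν)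
termination_by T + 1 - t
decreasing_by omega

/-- Soft-optimal state-action value `Q*_{t,r}`. -/
def Qstar (β : ℝ) (r : ℕ → S → A → ℝ) (t : ℕ) (s : S) (a : A) : ℝ :=
  r t s a + ∫ s', Vstar T P ν β r (t + 1) s' ∂(P t (s, a))

/-- `ν`-density of the soft-optimal policy `π*_r`. -/
def piStar (β : ℝ) (r : ℕ → S → A → ℝ) (t : ℕ) (s : S) (a : A) : ℝ :=
  Real.exp ((Qstar T P ν β r t s a - Vstar T P ν β r t s) / β)

/-- Value function `V^π_{t,r}` of a policy given by densities `p` (with `β = 0` this is the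
unregularized value function `V^{π,0}`). -/
def Vpol (β : ℝ) (p r : ℕ → S → A → ℝ) (t : ℕ) (s : S) : ℝ :=
  if T < t then 0
  else ∫ a,
    (r t s a + (∫ s', Vpol β p r (t + 1) s' ∂(P t (s, a))) - β * Real.log (p t s a)) * p t s a ∂ν
termination_by T + 1 - t
decreasing_by omega

/-- `Q^π_{t,r}` for a policy given by densities `p`. -/
def Qpol (β : ℝ) (p r : ℕ → S → A → ℝ) (t : ℕ) (s : S) (a : A) : ℝ :=
  r t s a + ∫ s', Vpol T P ν β p r (t + 1) s' ∂(P t (s, a))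

/-- Regularized advantage `A^π_{t,r}(s,a) = Q^π - V^π - β log π_t(a|s)`. -/
def Apol (β : ℝ) (p r : ℕ → S → A → ℝ) (t : ℕ) (s : S) (a : A) : ℝ :=
  Qpol T P ν β p r t s a - Vpol T P ν β p r t s - β * Real.log (p t s a)

variable (P0 : Measure S)

/-- Optimal value `J*(r) = ∫ V*_{1,r} dP₀`. -/
def Jstar (β : ℝ) (r : ℕ → S → A → ℝ) : ℝ := ∫ s, Vstar T P ν β r 1 s ∂P0

/-- Expected (regularized) return `J(r,π)` of a density policy. -/
def Jpol (β : ℝ) (p r : ℕ → S → A → ℝ) : ℝ := ∫ s, Vpol T P ν β p r 1 s ∂P0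

/-- Iterated expectation, from time `t` in state `s`, of a trajectory functional `g` under a
(kernel) Markov policy `π`; coordinates of the trajectory outside `{1,…,T}` are irrelevant
junk values. -/
def polExp [Nonempty S] [Nonempty A] (pol : ℕ → Kernel S A) (g : (ℕ → S × A) → ℝ) (t : ℕ)
    (s : S) : ℝ :=
  if T < t then g (fun _ => (Classical.arbitrary S, Classical.arbitrary A))
  else ∫ a, ∫ s', polExp pol (fun τ => g (Function.update τ t (s, a))) (t + 1) s' ∂(P t (s, a))
    ∂(pol t s)
termination_by T + 1 - t
decreasing_by omega

/-- `μ` is the trajectory law `P^π` of the Markov policy `π` (with initial distribution `P₀`),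
characterized through integrals of all bounded measurable trajectory functionals. -/
def IsTrajLaw [Nonempty S] [Nonempty A] (pol : ℕ → Kernel S A) (μ : Measure (ℕ → S × A)) : Prop :=
  IsProbabilityMeasure μ ∧
    ∀ g : (ℕ → S × A) → ℝ, Measurable g → (∃ C, ∀ τ, |g τ| ≤ C) →
      ∫ τ, g τ ∂μ = ∫ s, polExp T P pol g 1 s ∂P0

/-- The kernel `s ↦ p t s ⬝ ν` of a policy given by densities. -/
def densKernel [IsFiniteMeasure ν] (p : ℕ → S → A → ℝ) (t : ℕ) : Kernel S A :=
  Kernel.withDensity (Kernel.const S ν) fun s a => ENNReal.ofReal (p t s a)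

open Classical in
/-- Kullback–Leibler divergence `∫ log (dμ/dμ') dμ` if `μ ≪ μ'` (`∞` otherwise). -/
def KL {X : Type*} [MeasurableSpace X] (μ μ' : Measure X) : ℝ≥0∞ :=
  if μ ≪ μ' ∧ Integrable (fun x => Real.log (μ.rnDeriv μ' x).toReal) μ then
    ENNReal.ofReal (∫ x, Real.log (μ.rnDeriv μ' x).toReal ∂μ)
  else ⊤

/-- Squared Hellinger distance, computed with the dominating measure `μ + μ'`. -/
def sqHellinger {X : Type*} [MeasurableSpace X] (μ μ' : Measure X) : ℝ :=
  ∫ x, (Real.sqrt ((μ.rnDeriv (μ + μ') x).toReal)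
      - Real.sqrt ((μ'.rnDeriv (μ + μ') x).toReal)) ^ 2 ∂(μ + μ')

/-- Second directional derivative. -/
def D2 {E : Type*} [NormedAddCommGroup E] [NormedSpace ℝ E] (F : E → ℝ) (θ ξ ζ : E) : ℝ :=
  fderiv ℝ (fun x => fderiv ℝ F x ζ) θ ξ

/-- Third directional derivative. -/
def D3 {E : Type*} [NormedAddCommGroup E] [NormedSpace ℝ E] (F : E → ℝ) (θ ξ ζ ω : E) : ℝ :=
  fderiv ℝ (fun x => D2 F x ζ ω) θ ξ

end IRL

open MeasureTheory ProbabilityTheory Real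
open scoped ENNReal

namespace CommonSupportAux

variable {S A : Type*} [MeasurableSpace S] [MeasurableSpace A]

/-- `polExp` commutes with multiplication by a constant. -/
theorem polExp_const_mul [Nonempty S] [Nonempty A]
    (T : ℕ) (P : ℕ → Kernel (S × A) S) (ν : Measure A) (pol : ℕ → Kernel S A)
    (c : ℝ) (t : ℕ) (g : (ℕ → S × A) → ℝ) (s : S) :
    IRL.polExp T P pol (fun τ => c * g τ) t s = c * IRL.polExp T P pol g t s := by
  conv_lhs => rw [IRL.polExp]
  conv_rhs => rw [IRL.polExp]
  split_ifs with h
  · rfl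
  · have ih : ∀ (a : A) (s' : S),
        IRL.polExp T P pol (fun τ => c * g (Function.update τ t (s, a))) (t + 1) s'
          = c * IRL.polExp T P pol (fun τ => g (Function.update τ t (s, a))) (t + 1) s' :=
      fun a s' => polExp_const_mul T P ν pol c (t + 1) _ s'
    simp only [ih, integral_const_mul]
termination_by T + 1 - t
decreasing_by omega

/-- Integral against a `densKernel`. -/
theorem integral_densKernel (ν : Measure A) [IsFiniteMeasure ν] (p : ℕ → S → A → ℝ)
    (hp : ∀ t, Measurable (fun q : S × A => p t q.1 q.2)) (hnn : ∀ t s a, 0 ≤ p t s a)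
    (t : ℕ) (s : S) (f : A → ℝ) :
    ∫ a, f a ∂(IRL.densKernel ν p t s) = ∫ a, p t s a * f a ∂ν := by
  have hmeas : Measurable (Function.uncurry fun s a => ENNReal.ofReal (p t s a)) :=
    ENNReal.measurable_ofReal.comp (hp t)
  rw [IRL.densKernel, ProbabilityTheory.Kernel.withDensity_apply _ hmeas]
  simp only [Kernel.const_apply]
  have hsec : Measurable fun a => Real.toNNReal (p t s a) :=
    measurable_real_toNNReal.comp ((hp t).comp measurable_prodMk_left)
  have hcoe : (fun a => ENNReal.ofReal (p t s a))
      = fun a => ((Real.toNNReal (p t s a) : NNReal) : ENNReal) := rfl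
  rw [hcoe, integral_withDensity_eq_integral_smul hsec]
  refine integral_congr_ae (Filter.Eventually.of_forall fun a => ?_)
  simp only [NNReal.smul_def, Real.coe_toNNReal _ (hnn t s a), smul_eq_mul]

/-- Change of measure for `polExp` between two density policies. -/
theorem polExp_ratio [Nonempty S] [Nonempty A]
    (T : ℕ) (P : ℕ → Kernel (S × A) S) (ν : Measure A) [IsFiniteMeasure ν]
    (p p' : ℕ → S → A → ℝ)
    (hp : ∀ t, Measurable (fun q : S × A => p t q.1 q.2))
    (hp' : ∀ t, Measurable (fun q : S × A => p' t q.1 q.2))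
    (hnn : ∀ t s a, 0 ≤ p t s a) (hpos' : ∀ t s a, 0 < p' t s a)
    (t : ℕ) (g : (ℕ → S × A) → ℝ) (s : S) :
    IRL.polExp T P (IRL.densKernel ν p) g t s
      = IRL.polExp T P (IRL.densKernel ν p')
          (fun τ => (∏ u ∈ Finset.Icc t T, p u (τ u).1 (τ u).2 / p' u (τ u).1 (τ u).2) * g τ)
          t s := by
  conv_lhs => rw [IRL.polExp]
  conv_rhs => rw [IRL.polExp]
  split_ifs with h
  · rw [Finset.Icc_eq_empty (by omega), Finset.prod_empty, one_mul]
  · push_neg at h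
    have ih : ∀ (a : A) (s' : S),
        IRL.polExp T P (IRL.densKernel ν p) (fun τ => g (Function.update τ t (s, a))) (t + 1) s'
          = IRL.polExp T P (IRL.densKernel ν p')
              (fun τ => (∏ u ∈ Finset.Icc (t + 1) T,
                  p u (τ u).1 (τ u).2 / p' u (τ u).1 (τ u).2)
                * g (Function.update τ t (s, a))) (t + 1) s' :=
      fun a s' => polExp_ratio T P ν p p' hp hp' hnn hpos' (t + 1) _ s'
    have hins : Finset.Icc t T = insert t (Finset.Icc (t + 1) T) := by
      ext u; simp only [Finset.mem_Icc, Finset.mem_insert]; omega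
    have hsplit : ∀ (a : A) (τ : ℕ → S × A),
        (∏ u ∈ Finset.Icc t T,
            p u ((Function.update τ t (s, a)) u).1 ((Function.update τ t (s, a)) u).2
              / p' u ((Function.update τ t (s, a)) u).1 ((Function.update τ t (s, a)) u).2)
          = (p t s a / p' t s a) *
              ∏ u ∈ Finset.Icc (t + 1) T, p u (τ u).1 (τ u).2 / p' u (τ u).1 (τ u).2 := by
      intro a τ
      rw [hins, Finset.prod_insert (by simp), Function.update_self]
      congr 1
      refine Finset.prod_congr rfl fun u hu => ?_
      have : u ≠ t := by simp only [Finset.mem_Icc] at hu; omega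
      rw [Function.update_of_ne this]
    simp only [ih, hsplit, mul_assoc]
    simp only [polExp_const_mul T P ν (IRL.densKernel ν p'), integral_const_mul]
    rw [integral_densKernel ν p hp hnn, integral_densKernel ν p' hp'
      (fun t s a => (hpos' t s a).le)]
    refine integral_congr_ae (Filter.Eventually.of_forall fun a => ?_)
    have hcancel : p' t s a * (p t s a / p' t s a) = p t s a := by
      rw [mul_comm]; exact div_mul_cancel₀ _ (hpos' t s a).ne'
    simp only [← mul_assoc, hcancel]
termination_by T + 1 - t
decreasing_by omega

/-- Measurability and boundedness of the soft value function. -/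
theorem vstar_meas_bdd (T : ℕ) (P : ℕ → Kernel (S × A) S) [∀ t, IsMarkovKernel (P t)]
    (ν : Measure A) [IsFiniteMeasure ν] (hν : ν Set.univ ≠ 0)
    (β : ℝ) (hβ : 0 < β) (r : ℕ → S → A → ℝ) (hr : IRL.IsBddReward r) (t : ℕ) :
    Measurable (IRL.Vstar T P ν β r t) ∧ ∃ C, ∀ s, |IRL.Vstar T P ν β r t s| ≤ C := by
  by_cases h : T < t
  · constructor
    · have : IRL.Vstar T P ν β r t = fun _ => 0 := by
        funext s; rw [IRL.Vstar, if_pos h]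
      rw [this]; exact measurable_const
    · exact ⟨0, fun s => by rw [IRL.Vstar, if_pos h]; simp⟩
  · obtain ⟨hmV, CV, hCV⟩ := vstar_meas_bdd T P ν hν β hβ r hr (t + 1)
    obtain ⟨hmr, Cr, hCr⟩ := hr t
    set V := IRL.Vstar T P ν β r (t + 1)
    have hQmeas : Measurable (fun q : S × A =>
        r t q.1 q.2 + ∫ s', V s' ∂(P t q)) := by
      refine hmr.add ?_
      exact ((hmV.comp measurable_snd).stronglyMeasurable.integral_kernel_prod_right'
        (κ := P t)).measurable
    have hQbdd : ∀ q : S × A, |r t q.1 q.2 + ∫ s', V s' ∂(P t q)| ≤ Cr + CV := by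
      intro q
      refine (abs_add_le _ _).trans (add_le_add (hCr q.1 q.2) ?_)
      have := norm_integral_le_of_norm_le_const (μ := P t q) (f := V) (C := CV)
        (Filter.Eventually.of_forall fun s' => by simpa using hCV s')
      simpa [measure_univ] using this
    set M := Cr + CV with hM
    set c := (ν Set.univ).toReal with hc
    have hcpos : 0 < c := ENNReal.toReal_pos hν (measure_ne_top _ _)
    have hint : ∀ s : S, Integrable
        (fun a => Real.exp ((r t s a + ∫ s', V s' ∂(P t (s, a))) / β)) ν := by
      intro s
      refine (integrable_const (Real.exp (M / β))).mono' ?_ ?_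
      · exact ((Real.measurable_exp.comp
          ((hQmeas.comp measurable_prodMk_left).div_const β))).aestronglyMeasurable
      · refine Filter.Eventually.of_forall fun a => ?_
        rw [Real.norm_eq_abs, abs_of_pos (Real.exp_pos _)]
        exact Real.exp_le_exp.2 (div_le_div_of_nonneg_right
          ((le_abs_self _).trans (hQbdd (s, a))) hβ.le)
    have hlow : ∀ s : S, Real.exp (-M / β) * c
        ≤ ∫ a, Real.exp ((r t s a + ∫ s', V s' ∂(P t (s, a))) / β) ∂ν := by
      intro s
      have := integral_mono (integrable_const (Real.exp (-M / β))) (hint s)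
        (fun a => Real.exp_le_exp.2 (div_le_div_of_nonneg_right
          (neg_le_of_abs_le (hQbdd (s, a))) hβ.le))
      simpa [integral_const, smul_eq_mul, mul_comm, hc, Measure.real_def] using this
    have hup : ∀ s : S, (∫ a, Real.exp ((r t s a + ∫ s', V s' ∂(P t (s, a))) / β) ∂ν)
        ≤ Real.exp (M / β) * c := by
      intro s
      have := integral_mono (hint s) (integrable_const (Real.exp (M / β)))
        (fun a => Real.exp_le_exp.2 (div_le_div_of_nonneg_right
          ((le_abs_self _).trans (hQbdd (s, a))) hβ.le))
      simpa [integral_const, smul_eq_mul, mul_comm, hc, Measure.real_def] using this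
    have hIpos : ∀ s : S,
        0 < ∫ a, Real.exp ((r t s a + ∫ s', V s' ∂(P t (s, a))) / β) ∂ν :=
      fun s => lt_of_lt_of_le (by positivity) (hlow s)
    constructor
    · have hfun : IRL.Vstar T P ν β r t = fun s =>
          β * Real.log (∫ a, Real.exp ((r t s a + ∫ s', V s' ∂(P t (s, a))) / β) ∂ν) := by
        funext s; rw [IRL.Vstar, if_neg h]
      rw [hfun]
      have hImeas : Measurable fun s =>
          ∫ a, Real.exp ((r t s a + ∫ s', V s' ∂(P t (s, a))) / β) ∂ν := by
        exact ((Real.measurable_exp.comp (hQmeas.div_const β)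
          ).stronglyMeasurable.integral_prod_right').measurable
      exact measurable_const.mul (Real.measurable_log.comp hImeas)
    · refine ⟨β * (M / β + |Real.log c|), fun s => ?_⟩
      rw [IRL.Vstar, if_neg h]
      set I := ∫ a, Real.exp ((r t s a + ∫ s', V s' ∂(P t (s, a))) / β) ∂ν with hI
      have hlogup : Real.log I ≤ M / β + |Real.log c| := by
        calc Real.log I ≤ Real.log (Real.exp (M / β) * c) :=
              Real.log_le_log (hIpos s) (hup s)
          _ = M / β + Real.log c := by
              rw [Real.log_mul (Real.exp_ne_zero _) hcpos.ne', Real.log_exp]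
          _ ≤ M / β + |Real.log c| := by linarith [le_abs_self (Real.log c)]
      have hlogdown : -(M / β + |Real.log c|) ≤ Real.log I := by
        calc -(M / β + |Real.log c|) ≤ -M / β + Real.log c := by
              have h1 := neg_abs_le (Real.log c)
              have h2 : -(M / β) = -M / β := (neg_div _ _).symm
              linarith
          _ = Real.log (Real.exp (-M / β) * c) := by
              rw [Real.log_mul (Real.exp_ne_zero _) hcpos.ne', Real.log_exp]
          _ ≤ Real.log I := Real.log_le_log (by positivity) (hlow s)
      rw [abs_mul, abs_of_pos hβ]
      refine mul_le_mul_of_nonneg_left ?_ hβ.le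
      exact abs_le.2 ⟨hlogdown, hlogup⟩
termination_by T + 1 - t
decreasing_by omega

/-- Measurability of `piStar` and boundedness of its log. -/
theorem piStar_meas_bdd (T : ℕ) (P : ℕ → Kernel (S × A) S) [∀ t, IsMarkovKernel (P t)]
    (ν : Measure A) [IsFiniteMeasure ν] (hν : ν Set.univ ≠ 0)
    (β : ℝ) (hβ : 0 < β) (r : ℕ → S → A → ℝ) (hr : IRL.IsBddReward r) (t : ℕ) :
    Measurable (fun q : S × A => IRL.piStar T P ν β r t q.1 q.2)
      ∧ ∃ K, ∀ s a, Real.exp (-K) ≤ IRL.piStar T P ν β r t s a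
          ∧ IRL.piStar T P ν β r t s a ≤ Real.exp K := by
  obtain ⟨hmV1, CV1, hCV1⟩ := vstar_meas_bdd T P ν hν β hβ r hr (t + 1)
  obtain ⟨hmV, CV, hCV⟩ := vstar_meas_bdd T P ν hν β hβ r hr t
  obtain ⟨hmr, Cr, hCr⟩ := hr t
  have hQmeas : Measurable (fun q : S × A => IRL.Qstar T P ν β r t q.1 q.2) := by
    simp only [IRL.Qstar]
    refine hmr.add ?_
    exact ((hmV1.comp measurable_snd).stronglyMeasurable.integral_kernel_prod_right'
      (κ := P t)).measurable
  have hQbdd : ∀ s a, |IRL.Qstar T P ν β r t s a| ≤ Cr + CV1 := by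
    intro s a
    simp only [IRL.Qstar]
    refine (abs_add_le _ _).trans (add_le_add (hCr s a) ?_)
    have := norm_integral_le_of_norm_le_const (μ := P t (s, a))
      (f := IRL.Vstar T P ν β r (t + 1)) (C := CV1)
      (Filter.Eventually.of_forall fun s' => by simpa using hCV1 s')
    simpa [measure_univ] using this
  constructor
  · simp only [IRL.piStar]
    exact Real.measurable_exp.comp ((hQmeas.sub (hmV.comp measurable_fst)).div_const β)
  · refine ⟨(Cr + CV1 + CV) / β, fun s a => ?_⟩
    have habs : |(IRL.Qstar T P ν β r t s a - IRL.Vstar T P ν β r t s) / β|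
        ≤ (Cr + CV1 + CV) / β := by
      rw [abs_div, abs_of_pos hβ]
      refine div_le_div_of_nonneg_right ?_ hβ.le
      calc |IRL.Qstar T P ν β r t s a - IRL.Vstar T P ν β r t s|
          ≤ |IRL.Qstar T P ν β r t s a| + |IRL.Vstar T P ν β r t s| := abs_sub _ _
        _ ≤ Cr + CV1 + CV := by have := hQbdd s a; have := hCV s; linarith
    rw [IRL.piStar]
    exact ⟨Real.exp_le_exp.2 (neg_le_of_abs_le habs),
      Real.exp_le_exp.2 ((le_abs_self _).trans habs)⟩

/-- Trajectory-law change of measure. -/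
theorem traj_eq_withDensity [Nonempty S] [Nonempty A]
    (T : ℕ) (P0 : Measure S) [IsProbabilityMeasure P0]
    (P : ℕ → Kernel (S × A) S) (ν : Measure A) [IsFiniteMeasure ν]
    (p p' : ℕ → S → A → ℝ)
    (hp : ∀ t, Measurable (fun q : S × A => p t q.1 q.2))
    (hp' : ∀ t, Measurable (fun q : S × A => p' t q.1 q.2))
    (hnn : ∀ t s a, 0 ≤ p t s a) (hpos' : ∀ t s a, 0 < p' t s a)
    (C : ℝ)
    (hρbdd : ∀ τ : ℕ → S × A,
      (∏ u ∈ Finset.Icc 1 T, p u (τ u).1 (τ u).2 / p' u (τ u).1 (τ u).2) ≤ C)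
    (μ μ' : Measure (ℕ → S × A))
    (hμ : IRL.IsTrajLaw T P P0 (IRL.densKernel ν p) μ)
    (hμ' : IRL.IsTrajLaw T P P0 (IRL.densKernel ν p') μ') :
    μ = μ'.withDensity (fun τ =>
      ENNReal.ofReal (∏ u ∈ Finset.Icc 1 T, p u (τ u).1 (τ u).2 / p' u (τ u).1 (τ u).2)) := by
  set ρ : (ℕ → S × A) → ℝ :=
    fun τ => ∏ u ∈ Finset.Icc 1 T, p u (τ u).1 (τ u).2 / p' u (τ u).1 (τ u).2 with hρdef
  have hρmeas : Measurable ρ := by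
    refine Finset.measurable_prod _ fun u _ => ?_
    exact ((hp u).comp (measurable_pi_apply u)).div ((hp' u).comp (measurable_pi_apply u))
  have hρnn : ∀ τ, 0 ≤ ρ τ := fun τ =>
    Finset.prod_nonneg fun u _ => div_nonneg (hnn _ _ _) (hpos' _ _ _).le
  haveI := hμ.1
  haveI := hμ'.1
  ext E hE
  have hindmeas : Measurable (E.indicator (1 : (ℕ → S × A) → ℝ)) :=
    measurable_one.indicator hE
  have hindbdd : ∀ τ, |E.indicator (1 : (ℕ → S × A) → ℝ) τ| ≤ 1 := fun τ => by
    by_cases hτ : τ ∈ E <;> simp [hτ]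
  have h1 : ∫ τ, E.indicator 1 τ ∂μ
      = ∫ s, IRL.polExp T P (IRL.densKernel ν p) (E.indicator 1) 1 s ∂P0 :=
    hμ.2 _ hindmeas ⟨1, hindbdd⟩
  have h2 : ∫ s, IRL.polExp T P (IRL.densKernel ν p) (E.indicator 1) 1 s ∂P0
      = ∫ s, IRL.polExp T P (IRL.densKernel ν p')
          (fun τ => ρ τ * E.indicator 1 τ) 1 s ∂P0 :=
    integral_congr_ae (Filter.Eventually.of_forall fun s =>
      polExp_ratio T P ν p p' hp hp' hnn hpos' 1 _ s)
  have h3 : ∫ τ, ρ τ * E.indicator 1 τ ∂μ'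
      = ∫ s, IRL.polExp T P (IRL.densKernel ν p')
          (fun τ => ρ τ * E.indicator 1 τ) 1 s ∂P0 := by
    refine hμ'.2 _ (hρmeas.mul hindmeas) ⟨C, fun τ => ?_⟩
    rw [abs_mul, abs_of_nonneg (hρnn τ)]
    calc ρ τ * |E.indicator 1 τ| ≤ ρ τ * 1 :=
          mul_le_mul_of_nonneg_left (hindbdd τ) (hρnn τ)
      _ ≤ C := by rw [mul_one]; exact hρbdd τ
  have h4 : ∫ τ, ρ τ * E.indicator 1 τ ∂μ' = ∫ τ in E, ρ τ ∂μ' := by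
    rw [← integral_indicator hE]
    refine integral_congr_ae (Filter.Eventually.of_forall fun τ => ?_)
    by_cases hτ : τ ∈ E <;> simp [hτ]
  have hkey : (μ E).toReal = ∫ τ in E, ρ τ ∂μ' := by
    rw [← Measure.real_def, ← integral_indicator_one hE, h1, h2, ← h3, h4]
  have hρint : Integrable ρ (μ'.restrict E) := by
    refine Integrable.restrict ?_
    refine (integrable_const C).mono' hρmeas.aestronglyMeasurable ?_
    exact Filter.Eventually.of_forall fun τ => by
      rw [Real.norm_eq_abs, abs_of_nonneg (hρnn τ)]; exact hρbdd τ
  rw [withDensity_apply _ hE,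
    ← ofReal_integral_eq_lintegral_ofReal hρint
      (Filter.Eventually.of_forall fun τ => hρnn τ),
    ← hkey, ENNReal.ofReal_toReal (measure_ne_top μ E)]

end CommonSupportAux

/-- **Common support of soft-optimal trajectory laws** (Proposition `common_support`).
For `β > 0` and bounded measurable rewards `r, r′`, the trajectory laws of the soft-optimal
policies `π*_r` and `π*_{r′}` are mutually absolutely continuous, with Radon–Nikodym
derivative `dP^{π*_r}/dP^{π*_{r′}}(τ) = Π_t π*_{t,r}(a_t|s_t)/π*_{t,r′}(a_t|s_t)`, a quantity
taking values in `(0,∞)`. -/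
theorem soft_optimal_trajectory_laws_mutually_ac
    {S A : Type*} [MeasurableSpace S] [MeasurableSpace A] [Nonempty S] [Nonempty A]
    (T : ℕ) (hT : 1 ≤ T)
    (P0 : Measure S) [IsProbabilityMeasure P0]
    (P : ℕ → Kernel (S × A) S) [∀ t, IsMarkovKernel (P t)]
    (ν : Measure A) [IsFiniteMeasure ν] (hν : ν Set.univ ≠ 0)
    (β : ℝ) (hβ : 0 < β)
    (r r' : ℕ → S → A → ℝ) (hr : IRL.IsBddReward r) (hr' : IRL.IsBddReward r')
    (μr μr' : Measure (ℕ → S × A))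
    (hμr : IRL.IsTrajLaw T P P0 (IRL.densKernel ν (IRL.piStar T P ν β r)) μr)
    (hμr' : IRL.IsTrajLaw T P P0 (IRL.densKernel ν (IRL.piStar T P ν β r')) μr') :
    μr ≪ μr' ∧ μr' ≪ μr ∧
    (∀ᵐ τ ∂μr', (μr.rnDeriv μr' τ).toReal
        = ∏ t ∈ Finset.Icc 1 T,
            IRL.piStar T P ν β r t (τ t).1 (τ t).2
              / IRL.piStar T P ν β r' t (τ t).1 (τ t).2) ∧
    (∀ τ : ℕ → S × A, 0 < ∏ t ∈ Finset.Icc 1 T,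
        IRL.piStar T P ν β r t (τ t).1 (τ t).2
          / IRL.piStar T P ν β r' t (τ t).1 (τ t).2) := by
  classical
  haveI := hμr.1
  haveI := hμr'.1
  have hps := fun t => CommonSupportAux.piStar_meas_bdd T P ν hν β hβ r hr t
  have hps' := fun t => CommonSupportAux.piStar_meas_bdd T P ν hν β hβ r' hr' t
  have hpmeas : ∀ t, Measurable (fun q : S × A => IRL.piStar T P ν β r t q.1 q.2) :=
    fun t => (hps t).1
  have hpmeas' : ∀ t, Measurable (fun q : S × A => IRL.piStar T P ν β r' t q.1 q.2) :=
    fun t => (hps' t).1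
  have hpos : ∀ t s a, 0 < IRL.piStar T P ν β r t s a := fun t s a => Real.exp_pos _
  have hpos' : ∀ t s a, 0 < IRL.piStar T P ν β r' t s a := fun t s a => Real.exp_pos _
  set ρ : (ℕ → S × A) → ℝ := fun τ => ∏ t ∈ Finset.Icc 1 T,
    IRL.piStar T P ν β r t (τ t).1 (τ t).2 / IRL.piStar T P ν β r' t (τ t).1 (τ t).2
    with hρdef
  set ρ' : (ℕ → S × A) → ℝ := fun τ => ∏ t ∈ Finset.Icc 1 T,
    IRL.piStar T P ν β r' t (τ t).1 (τ t).2 / IRL.piStar T P ν β r t (τ t).1 (τ t).2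
    with hρ'def
  have hρnn : ∀ τ, 0 ≤ ρ τ := fun τ =>
    Finset.prod_nonneg fun u _ => div_nonneg (hpos _ _ _).le (hpos' _ _ _).le
  have hρ'nn : ∀ τ, 0 ≤ ρ' τ := fun τ =>
    Finset.prod_nonneg fun u _ => div_nonneg (hpos' _ _ _).le (hpos _ _ _).le
  have hbdd : ∀ τ, ρ τ ≤ ∏ t ∈ Finset.Icc 1 T,
      Real.exp ((hps t).2.choose + (hps' t).2.choose) := by
    intro τ
    refine Finset.prod_le_prod
      (fun u _ => div_nonneg (hpos _ _ _).le (hpos' _ _ _).le) (fun u _ => ?_)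
    have h1 := ((hps u).2.choose_spec (τ u).1 (τ u).2).2
    have h2 := ((hps' u).2.choose_spec (τ u).1 (τ u).2).1
    calc IRL.piStar T P ν β r u (τ u).1 (τ u).2 / IRL.piStar T P ν β r' u (τ u).1 (τ u).2
        ≤ Real.exp ((hps u).2.choose) / Real.exp (-(hps' u).2.choose) :=
          div_le_div₀ (Real.exp_pos _).le h1 (Real.exp_pos _) h2
      _ = Real.exp ((hps u).2.choose + (hps' u).2.choose) := by
          rw [← Real.exp_sub, sub_neg_eq_add]
  have hbdd' : ∀ τ, ρ' τ ≤ ∏ t ∈ Finset.Icc 1 T,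
      Real.exp ((hps' t).2.choose + (hps t).2.choose) := by
    intro τ
    refine Finset.prod_le_prod
      (fun u _ => div_nonneg (hpos' _ _ _).le (hpos _ _ _).le) (fun u _ => ?_)
    have h1 := ((hps' u).2.choose_spec (τ u).1 (τ u).2).2
    have h2 := ((hps u).2.choose_spec (τ u).1 (τ u).2).1
    calc IRL.piStar T P ν β r' u (τ u).1 (τ u).2 / IRL.piStar T P ν β r u (τ u).1 (τ u).2
        ≤ Real.exp ((hps' u).2.choose) / Real.exp (-(hps u).2.choose) :=
          div_le_div₀ (Real.exp_pos _).le h1 (Real.exp_pos _) h2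
      _ = Real.exp ((hps' u).2.choose + (hps u).2.choose) := by
          rw [← Real.exp_sub, sub_neg_eq_add]
  have heq : μr = μr'.withDensity (fun τ => ENNReal.ofReal (ρ τ)) :=
    CommonSupportAux.traj_eq_withDensity T P0 P ν _ _ hpmeas hpmeas'
      (fun t s a => (hpos t s a).le) hpos' _ hbdd μr μr' hμr hμr'
  have heq' : μr' = μr.withDensity (fun τ => ENNReal.ofReal (ρ' τ)) :=
    CommonSupportAux.traj_eq_withDensity T P0 P ν _ _ hpmeas' hpmeas
      (fun t s a => (hpos' t s a).le) hpos _ hbdd' μr' μr hμr' hμr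
  have hρmeas : Measurable ρ := by
    refine Finset.measurable_prod _ fun u _ => ?_
    exact ((hpmeas u).comp (measurable_pi_apply u)).div
      ((hpmeas' u).comp (measurable_pi_apply u))
  refine ⟨?_, ?_, ?_, ?_⟩
  · rw [heq]; exact withDensity_absolutelyContinuous _ _
  · rw [heq']; exact withDensity_absolutelyContinuous _ _
  · have hrn := MeasureTheory.Measure.rnDeriv_withDensity μr' hρmeas.ennreal_ofReal
    rw [heq]
    filter_upwards [hrn] with τ hτ
    rw [hτ, ENNReal.toReal_ofReal (hρnn τ)]
  · intro τ
    exact Finset.prod_pos fun u _ => div_pos (hpos _ _ _) (hpos' _ _ _)
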